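/- arXiv:2306.00335 — 10 statements merged into one kernel-verified Lean document; each statement's English description precedes it below -/
import Mathlib

section
/- Let n : ℕ and let D : Fin n → Type be state spaces with each D i a nonempty finite type. Suppose pa : Fin n → Finset (Fin n) satisfies j < i for every j ∈ pa i, and f : (i : Fin n) → ((∀ j, D j) → ℝ≥0) is a family of factors such that each f i is local to insert i (pa i) and, for every assignment x and every i, ∑_{s : D i} f i (Function.update x i s) = 1. Then the product of all factors is a probability distribution: ∑ over all assignments x : ∀ j, D j of ∏_{i : Fin n} f i x equals 1. -/
/-- A factor `φ` is *local* to a set of variables `C` if it only depends on the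
coordinates in `C`. -/
def IsLocal {n : ℕ} {D : Fin n → Type} (C : Finset (Fin n))
    (φ : (∀ j, D j) → NNReal) : Prop :=
  ∀ x y : ∀ j, D j, (∀ j ∈ C, x j = y j) → φ x = φ y

theorem bn_aux : ∀ (n : ℕ) (D : Fin n → Type) [∀ i, Fintype (D i)] [∀ i, Nonempty (D i)]
    (pa : Fin n → Finset (Fin n)) (_ : ∀ i : Fin n, ∀ j ∈ pa i, j < i)
    (f : ∀ _ : Fin n, (∀ j, D j) → NNReal)
    (_ : ∀ i : Fin n, IsLocal (insert i (pa i)) (f i))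
    (_ : ∀ (x : ∀ j, D j) (i : Fin n),
      ∑ s : D i, f i (Function.update x i s) = 1),
    ∑ x : ∀ j, D j, ∏ i : Fin n, f i x = 1 := by
  intro n
  induction n with
  | zero =>
    intro D _ _ pa hpa f hl hn
    simp
  | succ n ih =>
    intro D _ _ pa hpa f hl hn
    obtain ⟨z⟩ : Nonempty (D (Fin.last n)) := inferInstance
    set pa' : Fin n → Finset (Fin n) :=
      fun i => Finset.univ.filter (fun j => j.castSucc ∈ pa i.castSucc) with hpa'def
    set f' : ∀ _ : Fin n, (∀ j : Fin n, D j.castSucc) → NNReal :=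
      fun i x => f i.castSucc (Fin.snoc x z) with hf'
    have hcast : ∀ (i : Fin n) (x : ∀ j : Fin n, D j.castSucc) (s : D (Fin.last n)),
        f i.castSucc (Fin.snoc x s) = f' i x := by
      intro i x s
      apply hl
      intro j hj
      have hjlt : j < Fin.last n := by
        rcases Finset.mem_insert.mp hj with h | h
        · subst h; exact Fin.castSucc_lt_last i
        · exact lt_trans (hpa _ _ h) (Fin.castSucc_lt_last i)
      obtain ⟨j', rfl⟩ : ∃ j' : Fin n, j'.castSucc = j :=
        ⟨j.castLT (Fin.lt_last_iff_ne_last.mp hjlt |> fun h => by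
          exact lt_of_le_of_ne (Nat.lt_succ_iff.mp j.isLt) (fun he => h (Fin.ext he))), by
          simp [Fin.castSucc, Fin.castLT]⟩
      simp [Fin.snoc_castSucc]
    have key : ∑ x : ∀ j : Fin n, D j.castSucc, ∏ i : Fin n, f' i x = 1 := by
      apply ih (fun j => D j.castSucc) pa'
      · intro i j hj
        have := hpa i.castSucc j.castSucc (by simpa [hpa'def] using hj)
        exact_mod_cast Fin.castSucc_lt_castSucc_iff.mp this
      · intro i x y hxy
        show f i.castSucc (Fin.snoc x z) = f i.castSucc (Fin.snoc y z)
        apply hl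
        intro j hj
        rcases Finset.mem_insert.mp hj with h | h
        · subst h
          simp only [Fin.snoc_castSucc]
          exact hxy i (Finset.mem_insert_self _ _)
        · have hjlt : j < Fin.last n :=
            lt_trans (hpa _ _ h) (Fin.castSucc_lt_last i)
          obtain ⟨j', rfl⟩ : ∃ j' : Fin n, j'.castSucc = j :=
            ⟨j.castLT (by omega), rfl⟩
          simp only [Fin.snoc_castSucc]
          exact hxy j' (Finset.mem_insert_of_mem (by simp [hpa'def, h]))
      · intro x i
        show ∑ s : D i.castSucc, f i.castSucc (Fin.snoc (Function.update x i s) z) = 1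
        have : ∀ s : D i.castSucc, Fin.snoc (Function.update x i s) z
            = Function.update (Fin.snoc x z) i.castSucc s := by
          intro s; exact Fin.snoc_update z x i s
        simp_rw [this]
        exact hn (Fin.snoc x z) i.castSucc
    calc ∑ x : ∀ j, D j, ∏ i, f i x
        = ∑ p : D (Fin.last n) × (∀ i : Fin n, D i.castSucc),
            ∏ i, f i (Fin.snocEquiv D p) := (Equiv.sum_comp (Fin.snocEquiv D) _).symm
      _ = ∑ s : D (Fin.last n), ∑ x : ∀ i : Fin n, D i.castSucc,
            ∏ i, f i (Fin.snoc x s) := by rw [Fintype.sum_prod_type]; rfl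
      _ = ∑ x : ∀ i : Fin n, D i.castSucc, ∑ s : D (Fin.last n),
            (∏ i : Fin n, f' i x) * f (Fin.last n) (Fin.snoc x s) := by
            rw [Finset.sum_comm]
            refine Finset.sum_congr rfl fun x _ => Finset.sum_congr rfl fun s _ => ?_
            rw [Fin.prod_univ_castSucc]
            congr 1
            exact Finset.prod_congr rfl fun i _ => hcast i x s
      _ = ∑ x : ∀ i : Fin n, D i.castSucc, (∏ i : Fin n, f' i x) := by
            refine Finset.sum_congr rfl fun x _ => ?_
            rw [← Finset.mul_sum]
            have : ∑ s : D (Fin.last n), f (Fin.last n) (Fin.snoc x s)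
                = ∑ s : D (Fin.last n), f (Fin.last n)
                    (Function.update (Fin.snoc x z) (Fin.last n) s) := by
              refine Finset.sum_congr rfl fun s _ => ?_
              rw [Fin.update_snoc_last]
            rw [this, hn (Fin.snoc x z) (Fin.last n), mul_one]
      _ = 1 := key

/-- The product of the CPDs of a Bayesian network given in topological order is a
probability distribution: it sums to 1 over all assignments. -/
theorem bn_product_sums_to_one
    (n : ℕ) (D : Fin n → Type) [∀ i, Fintype (D i)] [∀ i, Nonempty (D i)]
    (pa : Fin n → Finset (Fin n)) (hpa : ∀ i : Fin n, ∀ j ∈ pa i, j < i)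
    (f : ∀ _ : Fin n, (∀ j, D j) → NNReal)
    (hlocal : ∀ i : Fin n, IsLocal (insert i (pa i)) (f i))
    (hnorm : ∀ (x : ∀ j, D j) (i : Fin n),
      ∑ s : D i, f i (Function.update x i s) = 1) :
    ∑ x : ∀ j, D j, ∏ i : Fin n, f i x = 1 :=
  bn_aux n D pa hpa f hlocal hnorm
end

section
/- Let f : (i : Fin n) → ((∀ j, D j) → ℝ≥0) be the factors of a Bayesian network given in topological order with parent map pa. Then for every Finset E ⊆ Fin n (the evidence variables) and every assignment e : ∀ j, D j (the evidence states), the sum over all assignments x satisfying x j = e j for all j ∈ E of ∏_{i : Fin n} f i x is at most 1. -/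
/-- For a Bayesian network given in topological order, the probability of any
evidence states (the sum of the product of all CPDs over the assignments
consistent with the evidence) is at most 1. -/
theorem bn_evidence_prob_le_one
    (n : ℕ) (D : Fin n → Type) [∀ i, Fintype (D i)] [∀ i, Nonempty (D i)]
    [∀ i, DecidableEq (D i)]
    (pa : Fin n → Finset (Fin n)) (hpa : ∀ i : Fin n, ∀ j ∈ pa i, j < i)
    (f : ∀ _ : Fin n, (∀ j, D j) → NNReal)
    (hlocal : ∀ i : Fin n, IsLocal (insert i (pa i)) (f i))
    (hnorm : ∀ (x : ∀ j, D j) (i : Fin n),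
      ∑ s : D i, f i (Function.update x i s) = 1)
    (E : Finset (Fin n)) (e : ∀ j, D j) :
    ∑ x ∈ Finset.univ.filter (fun x : ∀ j, D j => ∀ j ∈ E, x j = e j),
      ∏ i : Fin n, f i x ≤ 1 := by
  classical
  set g : ℕ → NNReal := fun m =>
    ∑ x ∈ Finset.univ.filter
        (fun x : ∀ j, D j => ∀ j : Fin n, m ≤ j.val → x j = e j),
      ∏ i ∈ Finset.univ.filter (fun i : Fin n => i.val < m), f i x with hg
  have key : ∀ m, m ≤ n → g m = 1 := by
    intro m hm
    induction m with
    | zero =>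
      have hset : Finset.univ.filter
          (fun x : ∀ j, D j => ∀ j : Fin n, x j = e j) = {e} := by
        ext x
        simp [funext_iff]
      simp [hg, hset]
    | succ m ih =>
      have hmn : m < n := hm
      have ihm := ih (le_of_lt hmn)
      rw [← ihm]
      set i0 : Fin n := ⟨m, hmn⟩ with hi0
      set A : Finset (∀ j, D j) := Finset.univ.filter
        (fun x : ∀ j, D j => ∀ j : Fin n, m ≤ j.val → x j = e j) with hA
      set A' : Finset (∀ j, D j) := Finset.univ.filter
        (fun x : ∀ j, D j => ∀ j : Fin n, m + 1 ≤ j.val → x j = e j) with hA'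
      have hmemA : ∀ x, x ∈ A ↔ ∀ j : Fin n, m ≤ j.val → x j = e j := by
        intro x; simp [hA]
      have hmemA' : ∀ x, x ∈ A' ↔ ∀ j : Fin n, m + 1 ≤ j.val → x j = e j := by
        intro x; simp [hA']
      have hfilt : Finset.univ.filter (fun i : Fin n => i.val < m + 1)
          = insert i0 (Finset.univ.filter (fun i : Fin n => i.val < m)) := by
        ext i
        simp only [Finset.mem_filter, Finset.mem_univ, true_and, Finset.mem_insert]
        constructor
        · intro h
          rcases Nat.lt_succ_iff_lt_or_eq.mp h with h' | h'
          · exact Or.inr h'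
          · left; exact Fin.ext h'
        · rintro (rfl | h)
          · exact Nat.lt_succ_self m
          · exact Nat.lt_succ_of_lt h
      have hi0notmem : i0 ∉ Finset.univ.filter (fun i : Fin n => i.val < m) := by
        simp [hi0]
      -- the unchanged factors don't depend on coordinate i0
      have hloc : ∀ (i : Fin n), i.val < m → ∀ (y : ∀ j, D j) (s : D i0),
          f i (Function.update y i0 s) = f i y := by
        intro i hi y s
        apply hlocal i
        intro j hj
        have hjlt : j.val < m := by
          rcases Finset.mem_insert.mp hj with rfl | hj'
          · exact hi
          · exact lt_trans (hpa i j hj') hi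
        have : j ≠ i0 := by
          intro h; rw [h] at hjlt; simp [hi0] at hjlt
        simp [Function.update_of_ne this]
      -- reindex g (m+1) as a double sum
      have h1 : g (m + 1) = ∑ p ∈ A ×ˢ (Finset.univ : Finset (D i0)),
          ∏ i ∈ Finset.univ.filter (fun i : Fin n => i.val < m + 1),
            f i (Function.update p.1 i0 p.2) := by
        rw [hg]
        refine Finset.sum_nbij'
          (fun x => (Function.update x i0 (e i0), x i0))
          (fun p => Function.update p.1 i0 p.2) ?_ ?_ ?_ ?_ ?_
        · intro x hx
          rw [Finset.mem_filter] at hx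
          refine Finset.mem_product.mpr ⟨(hmemA _).mpr ?_, Finset.mem_univ _⟩
          intro j hj
          show Function.update x i0 (e i0) j = e j
          by_cases hji : j = i0
          · subst hji; simp
          · have hjm : (j : ℕ) ≠ m := by
              intro h
              exact hji (Fin.ext (by simp [hi0, h]))
            have : m + 1 ≤ j.val := by omega
            rw [Function.update_of_ne hji]
            exact hx.2 j this
        · intro p hp
          rw [Finset.mem_product] at hp
          refine Finset.mem_filter.mpr ⟨Finset.mem_univ _, ?_⟩
          intro j hj
          show Function.update p.1 i0 p.2 j = e j
          have hji : j ≠ i0 := by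
            intro h; rw [h] at hj; simp [hi0] at hj
          rw [Function.update_of_ne hji]
          exact (hmemA _).mp hp.1 j (by omega)
        · intro x hx
          simp [Function.update_idem, Function.update_eq_self]
        · intro p hp
          obtain ⟨y, s⟩ := p
          rw [Finset.mem_product] at hp
          have he : y i0 = e i0 := (hmemA _).mp hp.1 i0 (le_refl m)
          show (Function.update (Function.update y i0 s) i0 (e i0),
              Function.update y i0 s i0) = (y, s)
          rw [Function.update_idem, Function.update_self, ← he,
            Function.update_eq_self]
        · intro x hx
          apply Finset.prod_congr rfl
          intro i _
          congr 1
          simp [Function.update_idem, Function.update_eq_self]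
      rw [h1, Finset.sum_product, hg]
      dsimp only
      apply Finset.sum_congr rfl
      intro y hy
      calc ∑ s : D i0, ∏ i ∈ Finset.univ.filter (fun i : Fin n => i.val < m + 1),
              f i (Function.update y i0 s)
          = ∑ s : D i0, f i0 (Function.update y i0 s) *
              ∏ i ∈ Finset.univ.filter (fun i : Fin n => i.val < m), f i y := by
            apply Finset.sum_congr rfl
            intro s _
            rw [hfilt, Finset.prod_insert hi0notmem]
            congr 1
            apply Finset.prod_congr rfl
            intro i hi
            exact hloc i (by simpa using hi) y s
        _ = (∑ s : D i0, f i0 (Function.update y i0 s)) *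
              ∏ i ∈ Finset.univ.filter (fun i : Fin n => i.val < m), f i y := by
            rw [Finset.sum_mul]
        _ = ∏ i ∈ Finset.univ.filter (fun i : Fin n => i.val < m), f i y := by
            rw [hnorm y i0, one_mul]
  have hgn : g n = ∑ x : ∀ j, D j, ∏ i : Fin n, f i x := by
    rw [hg]
    dsimp only
    have h1 : Finset.univ.filter
        (fun x : ∀ j, D j => ∀ j : Fin n, n ≤ j.val → x j = e j)
        = Finset.univ := by
      ext x
      simp only [Finset.mem_filter, Finset.mem_univ, true_and, iff_true]
      intro j hj
      exact absurd hj (by omega)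
    have h2 : Finset.univ.filter (fun i : Fin n => i.val < n) = Finset.univ := by
      ext i; simp [i.isLt]
    rw [h1, h2]
  calc ∑ x ∈ Finset.univ.filter (fun x : ∀ j, D j => ∀ j ∈ E, x j = e j),
        ∏ i : Fin n, f i x
      ≤ ∑ x : ∀ j, D j, ∏ i : Fin n, f i x :=
        Finset.sum_le_sum_of_subset (Finset.filter_subset _ _)
    _ = 1 := by rw [← hgn]; exact key n le_rfl
end

section
/- Let f : (i : Fin n) → ((∀ j, D j) → ℝ≥0) be the factors of a Bayesian network given in topological order with parent map pa. Let A ⊆ Fin n be a parent-closed Finset and let x₀ : ∀ j, D j be any fixed reference assignment. Then the sum over all assignments x satisfying x j = x₀ j for all j ∉ A of ∏_{i ∈ A} f i x equals 1. -/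
/-- For a Bayesian network given in topological order and a parent-closed subset `A`
of variables, the product of the factors of `A`, summed over the states of the
variables of `A` (the other coordinates being fixed to a reference assignment `x₀`),
equals 1: the partition-function estimate of any prefix CTF is 1 without evidence. -/
theorem bn_prefix_partition_function_eq_one
    (n : ℕ) (D : Fin n → Type) [∀ i, Fintype (D i)] [∀ i, Nonempty (D i)]
    [∀ i, DecidableEq (D i)]
    (pa : Fin n → Finset (Fin n)) (hpa : ∀ i : Fin n, ∀ j ∈ pa i, j < i)
    (f : ∀ _ : Fin n, (∀ j, D j) → NNReal)
    (hlocal : ∀ i : Fin n, IsLocal (insert i (pa i)) (f i))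
    (hnorm : ∀ (x : ∀ j, D j) (i : Fin n),
      ∑ s : D i, f i (Function.update x i s) = 1)
    (A : Finset (Fin n)) (hA : ∀ i ∈ A, pa i ⊆ A)
    (x₀ : ∀ j, D j) :
    ∑ x ∈ Finset.univ.filter (fun x : ∀ j, D j => ∀ j, j ∉ A → x j = x₀ j),
      ∏ i ∈ A, f i x = 1 := by
  classical
  revert hA
  induction A using Finset.strongInduction with
  | _ A ih =>
    intro hA
    rcases A.eq_empty_or_nonempty with rfl | hne
    · have hfilt : Finset.univ.filter
          (fun x : ∀ j, D j => ∀ j, j ∉ (∅ : Finset (Fin n)) → x j = x₀ j) = {x₀} := by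
        ext x
        simp [funext_iff]
      rw [hfilt]
      simp
    · set i := A.max' hne with hi
      have hiA : i ∈ A := A.max'_mem hne
      set A' := A.erase i with hA'def
      have hlt : ∀ j ∈ A', j < i := by
        intro j hj
        exact lt_of_le_of_ne (A.le_max' j (Finset.mem_of_mem_erase hj))
          (Finset.ne_of_mem_erase hj)
      have hA'closed : ∀ j ∈ A', pa j ⊆ A' := by
        intro j hj k hk
        have hkA : k ∈ A := hA j (Finset.mem_of_mem_erase hj) hk
        have : k < i := lt_trans (hpa j k hk) (hlt j hj)
        exact Finset.mem_erase.2 ⟨ne_of_lt this, hkA⟩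
      have hsub : A' ⊂ A := Finset.erase_ssubset hiA
      have key : ∑ x ∈ Finset.univ.filter (fun x : ∀ j, D j => ∀ j, j ∉ A → x j = x₀ j),
          ∏ j ∈ A, f j x
          = ∑ p ∈ (Finset.univ.filter
              (fun x : ∀ j, D j => ∀ j, j ∉ A' → x j = x₀ j)) ×ˢ (Finset.univ : Finset (D i)),
            ∏ j ∈ A, f j (Function.update p.1 i p.2) := by
        symm
        refine Finset.sum_nbij' (fun p => Function.update p.1 i p.2)
          (fun x => (Function.update x i (x₀ i), x i)) ?_ ?_ ?_ ?_ ?_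
        · intro p hp
          have hp1 := (Finset.mem_product.1 hp).1
          simp only [Finset.mem_filter, Finset.mem_univ, true_and] at hp1 ⊢
          intro j hj
          have hji : j ≠ i := fun h => hj (h ▸ hiA)
          rw [Function.update_of_ne hji]
          exact hp1 j (fun hjA' => hj (Finset.mem_of_mem_erase hjA'))
        · intro x hx
          simp only [Finset.mem_filter, Finset.mem_univ, true_and] at hx ⊢
          refine Finset.mem_product.2 ⟨?_, Finset.mem_univ _⟩
          simp only [Finset.mem_filter, Finset.mem_univ, true_and]
          intro j hj
          by_cases hji : j = i
          · subst hji; simp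
          · rw [Function.update_of_ne hji]
            exact hx j (fun hjA => hj (Finset.mem_erase.2 ⟨hji, hjA⟩))
        · intro p hp
          have hp1 := (Finset.mem_product.1 hp).1
          simp only [Finset.mem_filter, Finset.mem_univ, true_and] at hp1
          have hpi : p.1 i = x₀ i := hp1 i (Finset.notMem_erase i A)
          have h1 : Function.update (Function.update p.1 i p.2) i (x₀ i) = p.1 := by
            rw [Function.update_idem, ← hpi, Function.update_eq_self]
          simp [h1]
        · intro x hx
          funext j
          by_cases hji : j = i
          · subst hji; simp
          · simp [Function.update_of_ne hji]
        · intro p hp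
          rfl
      rw [key, Finset.sum_product]
      have inner : ∀ y ∈ Finset.univ.filter
          (fun x : ∀ j, D j => ∀ j, j ∉ A' → x j = x₀ j),
          ∑ s : D i, ∏ j ∈ A, f j (Function.update y i s)
            = ∏ j ∈ A', f j y := by
        intro y hy
        have hsplit : ∀ s : D i, ∏ j ∈ A, f j (Function.update y i s)
            = f i (Function.update y i s) * ∏ j ∈ A', f j (Function.update y i s) := by
          intro s
          exact (Finset.mul_prod_erase A (fun j => f j (Function.update y i s)) hiA).symm
        have hloc : ∀ s : D i, ∀ j ∈ A', f j (Function.update y i s) = f j y := by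
          intro s j hj
          apply hlocal j
          intro k hk
          have hki : k ≠ i := by
            rcases Finset.mem_insert.1 hk with h | h
            · exact h ▸ ne_of_lt (hlt j hj)
            · exact ne_of_lt (lt_trans (hpa j k h) (hlt j hj))
          exact Function.update_of_ne hki _ _
        calc ∑ s : D i, ∏ j ∈ A, f j (Function.update y i s)
            = ∑ s : D i, f i (Function.update y i s) * ∏ j ∈ A', f j y := by
              refine Finset.sum_congr rfl fun s _ => ?_
              rw [hsplit s]
              congr 1
              exact Finset.prod_congr rfl fun j hj => hloc s j hj
          _ = (∑ s : D i, f i (Function.update y i s)) * ∏ j ∈ A', f j y := by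
              rw [Finset.sum_mul]
          _ = ∏ j ∈ A', f j y := by rw [hnorm y i, one_mul]
      rw [Finset.sum_congr rfl inner]
      exact ih A' hsub hA'closed
end

section
/- Let f : (i : Fin n) → ((∀ j, D j) → ℝ≥0) be the factors of a Bayesian network given in topological order with parent map pa. Let A ⊆ B ⊆ Fin n be Finsets that are both parent-closed, let v ∈ A, let s : D v, and let x₀ : ∀ j, D j be a fixed reference assignment. Then the sum over all assignments y satisfying y v = s and y j = x₀ j for all j ∉ B of ∏_{i ∈ B} f i y equals the sum over all assignments y satisfying y v = s and y j = x₀ j for all j ∉ A of ∏_{i ∈ A} f i y. That is, the (unnormalized) prior marginal of any variable computed from a parent-closed prefix of the network is the same for every parent-closed prefix containing that variable. -/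
lemma sum_out_step
    (n : ℕ) (D : Fin n → Type) [∀ i, Fintype (D i)] [∀ i, Nonempty (D i)]
    [∀ i, DecidableEq (D i)]
    (pa : Fin n → Finset (Fin n))
    (f : ∀ _ : Fin n, (∀ j, D j) → NNReal)
    (hlocal : ∀ i : Fin n, IsLocal (insert i (pa i)) (f i))
    (hnorm : ∀ (x : ∀ j, D j) (i : Fin n),
      ∑ s : D i, f i (Function.update x i s) = 1)
    (B : Finset (Fin n)) (m : Fin n) (hm : m ∈ B)
    (hnp : ∀ i ∈ B.erase m, m ∉ pa i)
    (v : Fin n) (hmv : m ≠ v) (s : D v) (x₀ : ∀ j, D j) :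
    ∑ y ∈ Finset.univ.filter
        (fun y : ∀ j, D j => y v = s ∧ ∀ j, j ∉ B → y j = x₀ j),
      ∏ i ∈ B, f i y
      =
    ∑ y ∈ Finset.univ.filter
        (fun y : ∀ j, D j => y v = s ∧ ∀ j, j ∉ B.erase m → y j = x₀ j),
      ∏ i ∈ B.erase m, f i y := by
  classical
  symm
  calc
    ∑ y ∈ Finset.univ.filter
        (fun y : ∀ j, D j => y v = s ∧ ∀ j, j ∉ B.erase m → y j = x₀ j),
      ∏ i ∈ B.erase m, f i y
      = ∑ y ∈ Finset.univ.filter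
        (fun y : ∀ j, D j => y v = s ∧ ∀ j, j ∉ B.erase m → y j = x₀ j),
        ∑ t : D m, ∏ i ∈ B, f i (Function.update y m t) := by
        refine Finset.sum_congr rfl fun y _ => ?_
        have h1 : ∀ t : D m, ∏ i ∈ B, f i (Function.update y m t)
            = f m (Function.update y m t) * ∏ i ∈ B.erase m, f i y := by
          intro t
          rw [← Finset.mul_prod_erase B _ hm]
          congr 1
          refine Finset.prod_congr rfl fun i hi => ?_
          refine hlocal i _ _ fun j hj => ?_
          have hji : j ≠ m := by
            rcases Finset.mem_insert.1 hj with h | h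
            · exact h ▸ (Finset.mem_erase.1 hi).1
            · intro hjm; exact hnp i hi (hjm ▸ h)
          simp [Function.update, hji]
        simp_rw [h1, ← Finset.sum_mul, hnorm y m, one_mul]
    _ = ∑ p ∈ (Finset.univ.filter
        (fun y : ∀ j, D j => y v = s ∧ ∀ j, j ∉ B.erase m → y j = x₀ j)) ×ˢ
          (Finset.univ : Finset (D m)),
        ∏ i ∈ B, f i (Function.update p.1 m p.2) := by
        rw [Finset.sum_product]
    _ = ∑ y ∈ Finset.univ.filter
        (fun y : ∀ j, D j => y v = s ∧ ∀ j, j ∉ B → y j = x₀ j),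
      ∏ i ∈ B, f i y := by
        refine Finset.sum_bij' (fun p _ => Function.update p.1 m p.2)
          (fun z _ => (Function.update z m (x₀ m), z m)) ?_ ?_ ?_ ?_ ?_
        · rintro ⟨y, t⟩ hp
          simp only [Finset.mem_product, Finset.mem_filter, Finset.mem_univ,
            true_and] at hp ⊢
          obtain ⟨⟨hv, hout⟩, -⟩ := hp
          constructor
          · rw [Function.update_of_ne (Ne.symm hmv)]; exact hv
          · intro j hj
            have hjm : j ≠ m := fun h => hj (h ▸ hm)
            rw [Function.update_of_ne hjm]
            exact hout j (by simp [hjm, hj])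
        · intro z hz
          simp only [Finset.mem_product, Finset.mem_filter, Finset.mem_univ,
            true_and] at hz ⊢
          obtain ⟨hv, hout⟩ := hz
          exact ⟨⟨by rw [Function.update_of_ne (Ne.symm hmv)]; exact hv,
            fun j hj => by
              by_cases hjm : j = m
              · subst hjm; simp
              · rw [Function.update_of_ne hjm]
                exact hout j (fun hjB => hj (Finset.mem_erase.2 ⟨hjm, hjB⟩))⟩,
            trivial⟩
        · rintro ⟨y, t⟩ hp
          simp only [Finset.mem_product, Finset.mem_filter, Finset.mem_univ,
            true_and] at hp
          obtain ⟨⟨-, hout⟩, -⟩ := hp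
          have : Function.update (Function.update y m t) m (x₀ m)
              = y := by
            funext j
            by_cases hjm : j = m
            · subst hjm
              simp [hout j (Finset.notMem_erase _ _)]
            · simp [Function.update, hjm]
          simp [this]
        · intro z hz
          funext j
          by_cases hjm : j = m
          · subst hjm; simp
          · simp [Function.update, hjm]
        · rintro ⟨y, t⟩ hp; rfl

/-- For a Bayesian network given in topological order, the (unnormalized) prior
marginal of a variable `v` computed from a parent-closed prefix is the same for
every parent-closed prefix containing `v`. -/
theorem bn_prior_marginals_consistent
    (n : ℕ) (D : Fin n → Type) [∀ i, Fintype (D i)] [∀ i, Nonempty (D i)]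
    [∀ i, DecidableEq (D i)]
    (pa : Fin n → Finset (Fin n)) (hpa : ∀ i : Fin n, ∀ j ∈ pa i, j < i)
    (f : ∀ _ : Fin n, (∀ j, D j) → NNReal)
    (hlocal : ∀ i : Fin n, IsLocal (insert i (pa i)) (f i))
    (hnorm : ∀ (x : ∀ j, D j) (i : Fin n),
      ∑ s : D i, f i (Function.update x i s) = 1)
    (A B : Finset (Fin n)) (hAB : A ⊆ B)
    (hA : ∀ i ∈ A, pa i ⊆ A) (hB : ∀ i ∈ B, pa i ⊆ B)
    (v : Fin n) (hv : v ∈ A) (s : D v) (x₀ : ∀ j, D j) :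
    ∑ y ∈ Finset.univ.filter
        (fun y : ∀ j, D j => y v = s ∧ ∀ j, j ∉ B → y j = x₀ j),
      ∏ i ∈ B, f i y
      =
    ∑ y ∈ Finset.univ.filter
        (fun y : ∀ j, D j => y v = s ∧ ∀ j, j ∉ A → y j = x₀ j),
      ∏ i ∈ A, f i y := by
  classical
  suffices H : ∀ k (B : Finset (Fin n)), A ⊆ B → (∀ i ∈ B, pa i ⊆ B) →
      (B \ A).card = k →
      ∑ y ∈ Finset.univ.filter
          (fun y : ∀ j, D j => y v = s ∧ ∀ j, j ∉ B → y j = x₀ j),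
        ∏ i ∈ B, f i y
        =
      ∑ y ∈ Finset.univ.filter
          (fun y : ∀ j, D j => y v = s ∧ ∀ j, j ∉ A → y j = x₀ j),
        ∏ i ∈ A, f i y by
    exact H _ B hAB hB rfl
  intro k
  induction k with
  | zero =>
      intro B hAB hB hk
      have hBA : B = A := by
        have : B \ A = ∅ := Finset.card_eq_zero.1 hk
        have h1 : B ⊆ A := fun x hx => by
          by_contra hxA
          exact absurd (Finset.mem_sdiff.2 ⟨hx, hxA⟩) (this ▸ Finset.notMem_empty x)
        exact Finset.Subset.antisymm h1 hAB
      subst hBA; rfl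
  | succ k ih =>
      intro B hAB hB hk
      have hne : (B \ A).Nonempty := Finset.card_pos.1 (hk ▸ Nat.succ_pos k)
      set m := (B \ A).max' hne with hmdef
      have hmBA : m ∈ B \ A := Finset.max'_mem _ hne
      have hmB : m ∈ B := (Finset.mem_sdiff.1 hmBA).1
      have hmA : m ∉ A := (Finset.mem_sdiff.1 hmBA).2
      have hmv : m ≠ v := fun h => hmA (h ▸ hv)
      -- m not a parent of anything in B.erase m
      have hnp : ∀ i ∈ B.erase m, m ∉ pa i := by
        intro i hi hmp
        have hiB : i ∈ B := Finset.mem_of_mem_erase hi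
        have hmi : m < i := hpa i m hmp
        by_cases hiA : i ∈ A
        · exact hmA (hA i hiA hmp)
        · exact absurd (Finset.le_max' _ i (Finset.mem_sdiff.2 ⟨hiB, hiA⟩))
            (not_le.2 hmi)
      have hstep := sum_out_step n D pa f hlocal hnorm B m hmB hnp v hmv s x₀
      rw [hstep]
      refine ih (B.erase m) (fun x hx => Finset.mem_erase.2 ⟨fun h => hmA (h ▸ hx), hAB hx⟩)
        (fun i hi j hj => Finset.mem_erase.2
          ⟨fun h => hnp i hi (h ▸ hj), hB i (Finset.mem_of_mem_erase hi) hj⟩) ?_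
      have : B.erase m \ A = (B \ A).erase m := by
        ext x; simp [Finset.mem_erase, Finset.mem_sdiff, and_assoc, and_left_comm]
      rw [this, Finset.card_erase_of_mem hmBA, hk]
      omega
end

section
/- Let f : (i : Fin n) → ((∀ j, D j) → ℝ≥0) be the factors of a Bayesian network given in topological order with parent map pa. Let A ⊆ B ⊆ Fin n be Finsets that are both parent-closed, let F ⊆ A be a Finset of evidence variables with evidence assignment e : ∀ j, D j, let v ∈ A, let s : D v, and let x₀ : ∀ j, D j be a fixed reference assignment. Then the sum over all assignments y satisfying y v = s, y j = e j for all j ∈ F, and y j = x₀ j for all j ∉ B of ∏_{i ∈ B} f i y equals the sum over all assignments y satisfying y v = s, y j = e j for all j ∈ F, and y j = x₀ j for all j ∉ A of ∏_{i ∈ A} f i y. In particular, once all evidence variables lie in a parent-closed prefix, the (unnormalized) posterior marginal of any variable of that prefix is the same when computed from any larger parent-closed prefix. -/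
/-- Summing out one variable `m` that no remaining factor depends on. -/
lemma bn_sum_out_step
    (n : ℕ) (D : Fin n → Type) [∀ i, Fintype (D i)]
    [∀ i, DecidableEq (D i)]
    (f : ∀ _ : Fin n, (∀ j, D j) → NNReal)
    (m : Fin n) (B : Finset (Fin n)) (hmB : m ∈ B)
    (hnormm : ∀ x : ∀ j, D j, ∑ t : D m, f m (Function.update x m t) = 1)
    (hfl : ∀ i ∈ B.erase m, ∀ (y : ∀ j, D j) (t : D m),
      f i (Function.update y m t) = f i y)
    (Q : (∀ j, D j) → Prop) [DecidablePred Q]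
    (hQ : ∀ (y : ∀ j, D j) (t : D m), Q (Function.update y m t) ↔ Q y)
    (x₀ : ∀ j, D j) :
    ∑ y ∈ Finset.univ.filter (fun y => Q y ∧ ∀ j, j ∉ B → y j = x₀ j),
      ∏ i ∈ B, f i y
    = ∑ y ∈ Finset.univ.filter (fun y => Q y ∧ ∀ j, j ∉ B.erase m → y j = x₀ j),
      ∏ i ∈ B.erase m, f i y := by
  classical
  have key : ∀ z ∈ Finset.univ.filter
      (fun y => Q y ∧ ∀ j, j ∉ B.erase m → y j = x₀ j),
      ∏ i ∈ B.erase m, f i z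
      = ∑ t : D m, ∏ i ∈ B, f i (Function.update z m t) := by
    intro z _
    have : ∀ t : D m, ∏ i ∈ B, f i (Function.update z m t)
        = f m (Function.update z m t) * ∏ i ∈ B.erase m, f i z := by
      intro t
      rw [← Finset.mul_prod_erase B _ hmB]
      congr 1
      exact Finset.prod_congr rfl fun i hi => hfl i hi z t
    simp only [this, ← Finset.sum_mul, hnormm z, one_mul]
  rw [Finset.sum_congr rfl key, ← Finset.sum_product']
  refine Finset.sum_bij' (fun y _ => (Function.update y m (x₀ m), y m))
    (fun p _ => Function.update p.1 m p.2) ?_ ?_ ?_ ?_ ?_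
  · intro y hy
    simp only [Finset.mem_product, Finset.mem_filter, Finset.mem_univ, true_and] at hy ⊢
    obtain ⟨hQy, hyB⟩ := hy
    refine ⟨⟨(hQ y (x₀ m)).2 hQy, fun j hj => ?_⟩, trivial⟩
    by_cases hjm : j = m
    · subst hjm; simp
    · rw [Function.update_of_ne hjm]
      exact hyB j (fun hj' => hj (Finset.mem_erase.2 ⟨hjm, hj'⟩))
  · rintro ⟨z, t⟩ hp
    simp only [Finset.mem_product, Finset.mem_filter, Finset.mem_univ, true_and] at hp ⊢
    obtain ⟨⟨hQz, hz⟩, -⟩ := hp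
    refine ⟨(hQ z t).2 hQz, fun j hj => ?_⟩
    have hjm : j ≠ m := fun h => hj (h ▸ hmB)
    rw [Function.update_of_ne hjm]
    exact hz j (fun hj' => hj (Finset.mem_of_mem_erase hj'))
  · intro y hy
    simp [Function.update_idem, Function.update_eq_self]
  · rintro ⟨z, t⟩ hp
    simp only [Finset.mem_product, Finset.mem_filter, Finset.mem_univ, true_and] at hp
    obtain ⟨⟨-, hz⟩, -⟩ := hp
    have hzm : z m = x₀ m := hz m (by simp)
    simp [Function.update_idem, Function.update_self, ← hzm, Function.update_eq_self]
  · intro y hy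
    have : Function.update (Function.update y m (x₀ m)) m (y m) = y := by
      simp [Function.update_idem, Function.update_eq_self]
    rw [this]

/-- For a Bayesian network given in topological order, once all evidence variables
`F` lie in a parent-closed prefix `A`, the (unnormalized) posterior marginal of any
variable `v` of `A` is the same when computed from any larger parent-closed
prefix `B`. -/
theorem bn_posterior_marginals_consistent
    (n : ℕ) (D : Fin n → Type) [∀ i, Fintype (D i)] [∀ i, Nonempty (D i)]
    [∀ i, DecidableEq (D i)]
    (pa : Fin n → Finset (Fin n)) (hpa : ∀ i : Fin n, ∀ j ∈ pa i, j < i)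
    (f : ∀ _ : Fin n, (∀ j, D j) → NNReal)
    (hlocal : ∀ i : Fin n, IsLocal (insert i (pa i)) (f i))
    (hnorm : ∀ (x : ∀ j, D j) (i : Fin n),
      ∑ s : D i, f i (Function.update x i s) = 1)
    (A B : Finset (Fin n)) (hAB : A ⊆ B)
    (hA : ∀ i ∈ A, pa i ⊆ A) (hB : ∀ i ∈ B, pa i ⊆ B)
    (F : Finset (Fin n)) (hF : F ⊆ A) (e : ∀ j, D j)
    (v : Fin n) (hv : v ∈ A) (s : D v) (x₀ : ∀ j, D j) :
    ∑ y ∈ Finset.univ.filter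
        (fun y : ∀ j, D j =>
          y v = s ∧ (∀ j ∈ F, y j = e j) ∧ ∀ j, j ∉ B → y j = x₀ j),
      ∏ i ∈ B, f i y
      =
    ∑ y ∈ Finset.univ.filter
        (fun y : ∀ j, D j =>
          y v = s ∧ (∀ j ∈ F, y j = e j) ∧ ∀ j, j ∉ A → y j = x₀ j),
      ∏ i ∈ A, f i y := by
  classical
  suffices H : ∀ k (B : Finset (Fin n)), B.card ≤ k → A ⊆ B →
      (∀ i ∈ B, pa i ⊆ B) →
      ∑ y ∈ Finset.univ.filter
          (fun y : ∀ j, D j =>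
            y v = s ∧ (∀ j ∈ F, y j = e j) ∧ ∀ j, j ∉ B → y j = x₀ j),
        ∏ i ∈ B, f i y
        =
      ∑ y ∈ Finset.univ.filter
          (fun y : ∀ j, D j =>
            y v = s ∧ (∀ j ∈ F, y j = e j) ∧ ∀ j, j ∉ A → y j = x₀ j),
        ∏ i ∈ A, f i y from H B.card B le_rfl hAB hB
  intro k
  induction k with
  | zero =>
    intro B hcard hAB' hB'
    have : B = ∅ := Finset.card_eq_zero.1 (Nat.le_zero.1 hcard)
    subst this
    have : A = ∅ := Finset.subset_empty.1 hAB'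
    subst this
    rfl
  | succ k ih =>
    intro B hcard hAB' hB'
    by_cases hBA : B \ A = ∅
    · have : B = A := Finset.Subset.antisymm
        (fun x hx => by
          by_contra hxA
          exact absurd (Finset.mem_sdiff.2 ⟨hx, hxA⟩) (by simp [hBA])) hAB'
      subst this; rfl
    · have hne : (B \ A).Nonempty := Finset.nonempty_iff_ne_empty.2 hBA
      set m := (B \ A).max' hne with hm
      have hmBA : m ∈ B \ A := (B \ A).max'_mem hne
      have hmB : m ∈ B := (Finset.mem_sdiff.1 hmBA).1
      have hmA : m ∉ A := (Finset.mem_sdiff.1 hmBA).2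
      -- no remaining factor depends on m
      have hnotpa : ∀ i ∈ B.erase m, m ∉ insert i (pa i) := by
        intro i hi hmem
        obtain ⟨him, hiB⟩ := Finset.mem_erase.1 hi
        rcases Finset.mem_insert.1 hmem with h | h
        · exact him h.symm
        · by_cases hiA : i ∈ A
          · exact hmA (hA i hiA h)
          · have : i ∈ B \ A := Finset.mem_sdiff.2 ⟨hiB, hiA⟩
            exact absurd (hpa i m h) (not_lt.2 ((B \ A).le_max' i this))
      have hfl : ∀ i ∈ B.erase m, ∀ (y : ∀ j, D j) (t : D m),
          f i (Function.update y m t) = f i y := by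
        intro i hi y t
        refine hlocal i _ _ fun j hj => ?_
        have : j ≠ m := fun h => hnotpa i hi (h ▸ hj)
        rw [Function.update_of_ne this]
      have hstep := bn_sum_out_step n D f m B hmB (fun x => hnorm x m) hfl
        (fun y => y v = s ∧ ∀ j ∈ F, y j = e j)
        (by
          intro y t
          have hvm : v ≠ m := fun h => hmA (h ▸ hv)
          constructor
          · rintro ⟨h1, h2⟩
            refine ⟨by rwa [Function.update_of_ne hvm] at h1, fun j hj => ?_⟩
            have : j ≠ m := fun h => hmA (h ▸ hF hj)
            have := h2 j hj
            rwa [Function.update_of_ne ‹j ≠ m›] at this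
          · rintro ⟨h1, h2⟩
            refine ⟨by rwa [Function.update_of_ne hvm], fun j hj => ?_⟩
            have : j ≠ m := fun h => hmA (h ▸ hF hj)
            rw [Function.update_of_ne this]
            exact h2 j hj) x₀
      have hBe : ∀ i ∈ B.erase m, pa i ⊆ B.erase m := by
        intro i hi j hj
        refine Finset.mem_erase.2 ⟨fun h => hnotpa i hi (Finset.mem_insert_of_mem (h ▸ hj)), hB' i (Finset.mem_of_mem_erase hi) hj⟩
      have hABe : A ⊆ B.erase m := fun x hx =>
        Finset.mem_erase.2 ⟨fun h => hmA (h ▸ hx), hAB' hx⟩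
      have hcard' : (B.erase m).card ≤ k := by
        have := Finset.card_erase_of_mem hmB
        omega
      have h1 : Finset.univ.filter
          (fun y : ∀ j, D j => y v = s ∧ (∀ j ∈ F, y j = e j) ∧ ∀ j, j ∉ B → y j = x₀ j)
          = Finset.univ.filter
          (fun y : ∀ j, D j => (y v = s ∧ ∀ j ∈ F, y j = e j) ∧ ∀ j, j ∉ B → y j = x₀ j) := by
        ext y; simp [and_assoc]
      have h2 : Finset.univ.filter
          (fun y : ∀ j, D j => (y v = s ∧ ∀ j ∈ F, y j = e j) ∧ ∀ j, j ∉ B.erase m → y j = x₀ j)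
          = Finset.univ.filter
          (fun y : ∀ j, D j => y v = s ∧ (∀ j ∈ F, y j = e j) ∧ ∀ j, j ∉ B.erase m → y j = x₀ j) := by
        ext y; simp [and_assoc]
      rw [h1, hstep, h2]
      exact ih (B.erase m) hcard' hABe hBe
end

section
/- Let C₁, C₂ ⊆ Fin n be Finsets of variables with sepset S = C₁ ∩ C₂, and let x₀ : ∀ j, D j be a fixed reference assignment. Let f, g, μ : (∀ j, D j) → ℝ≥0 be local to C₁, C₂ and S respectively, and suppose the pair is calibrated: for every assignment x, the sum over all assignments y satisfying y j = x j for all j ∈ S and y j = x₀ j for all j ∉ C₁ of f y equals μ x, and the sum over all assignments y satisfying y j = x j for all j ∈ S and y j = x₀ j for all j ∉ C₂ of g y equals μ x. Then, with division in ℝ≥0 (where a / 0 = 0), for every assignment x the sum over all assignments y satisfying y j = x j for all j ∈ C₁ and y j = x₀ j for all j ∉ C₁ ∪ C₂ of (f y * g y / μ y) equals f x. That is, collapsing two calibrated adjacent cliques into the clique C₁ ∪ C₂ with belief f·g/μ preserves the joint belief of the variables of each original clique. -/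
/-- Collapsing two calibrated adjacent cliques `C₁, C₂` with sepset `S = C₁ ∩ C₂`
into the clique `C₁ ∪ C₂` with belief `f·g/μ` preserves the joint belief of the
variables of each original clique. -/
theorem collapse_preserves_clique_belief
    (n : ℕ) (D : Fin n → Type) [∀ i, Fintype (D i)] [∀ i, Nonempty (D i)]
    [∀ i, DecidableEq (D i)]
    (C₁ C₂ : Finset (Fin n)) (x₀ : ∀ j, D j)
    (f g μ : (∀ j, D j) → NNReal)
    (hf : IsLocal C₁ f) (hg : IsLocal C₂ g) (hμ : IsLocal (C₁ ∩ C₂) μ)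
    (hcal₁ : ∀ x : ∀ j, D j,
      ∑ y ∈ Finset.univ.filter
          (fun y : ∀ j, D j =>
            (∀ j ∈ C₁ ∩ C₂, y j = x j) ∧ ∀ j, j ∉ C₁ → y j = x₀ j),
        f y = μ x)
    (hcal₂ : ∀ x : ∀ j, D j,
      ∑ y ∈ Finset.univ.filter
          (fun y : ∀ j, D j =>
            (∀ j ∈ C₁ ∩ C₂, y j = x j) ∧ ∀ j, j ∉ C₂ → y j = x₀ j),
        g y = μ x) :
    ∀ x : ∀ j, D j,
      ∑ y ∈ Finset.univ.filter
          (fun y : ∀ j, D j =>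
            (∀ j ∈ C₁, y j = x j) ∧ ∀ j, j ∉ C₁ ∪ C₂ → y j = x₀ j),
        f y * g y / μ y = f x := by
  intro x
  have hgsum : ∑ y ∈ Finset.univ.filter
      (fun y : ∀ j, D j =>
        (∀ j ∈ C₁, y j = x j) ∧ ∀ j, j ∉ C₁ ∪ C₂ → y j = x₀ j), g y = μ x := by
    rw [← hcal₂ x]
    refine Finset.sum_bij' (fun y _ => fun j => if j ∈ C₂ then y j else x₀ j)
      (fun y _ => fun j => if j ∈ C₁ then x j else y j) ?_ ?_ ?_ ?_ ?_
    · intro y hy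
      simp only [Finset.mem_filter, Finset.mem_univ, true_and] at hy ⊢
      refine ⟨fun j hj => ?_, fun j hj => ?_⟩
      · rw [Finset.mem_inter] at hj
        rw [if_pos hj.2]; exact hy.1 j hj.1
      · rw [if_neg hj]
    · intro y hy
      simp only [Finset.mem_filter, Finset.mem_univ, true_and] at hy ⊢
      refine ⟨fun j hj => by rw [if_pos hj], fun j hj => ?_⟩
      rw [Finset.mem_union, not_or] at hj
      rw [if_neg hj.1]; exact hy.2 j hj.2
    · intro y hy
      simp only [Finset.mem_filter, Finset.mem_univ, true_and] at hy
      funext j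
      by_cases h1 : j ∈ C₁
      · simp only [if_pos h1]; exact (hy.1 j h1).symm
      · by_cases h2 : j ∈ C₂
        · simp [h1, h2]
        · simp only [if_neg h1, if_neg h2]
          exact (hy.2 j (by simp [h1, h2])).symm
    · intro y hy
      simp only [Finset.mem_filter, Finset.mem_univ, true_and] at hy
      funext j
      by_cases h2 : j ∈ C₂
      · by_cases h1 : j ∈ C₁
        · simp only [if_pos h2, if_pos h1]
          exact (hy.1 j (Finset.mem_inter.mpr ⟨h1, h2⟩)).symm
        · simp [h1, h2]
      · simp only [if_neg h2]; exact (hy.2 j h2).symm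
    · intro y _
      exact hg y _ (fun j hj => by simp [hj])
  have hterm : ∀ y ∈ Finset.univ.filter
      (fun y : ∀ j, D j =>
        (∀ j ∈ C₁, y j = x j) ∧ ∀ j, j ∉ C₁ ∪ C₂ → y j = x₀ j),
      f y * g y / μ y = f x / μ x * g y := by
    intro y hy
    simp only [Finset.mem_filter, Finset.mem_univ, true_and] at hy
    have hfy : f y = f x := hf y x hy.1
    have hμy : μ y = μ x := hμ y x (fun j hj => hy.1 j (Finset.mem_inter.mp hj).1)
    rw [hfy, hμy, mul_div_right_comm]
  rw [Finset.sum_congr rfl hterm, ← Finset.mul_sum, hgsum]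
  by_cases h : μ x = 0
  · have hfx : f x = 0 := by
      set x' : ∀ j, D j := fun j => if j ∈ C₁ then x j else x₀ j with hx'
      have hx'mem : x' ∈ Finset.univ.filter
          (fun y : ∀ j, D j =>
            (∀ j ∈ C₁ ∩ C₂, y j = x j) ∧ ∀ j, j ∉ C₁ → y j = x₀ j) := by
        simp only [Finset.mem_filter, Finset.mem_univ, true_and]
        exact ⟨fun j hj => by simp [hx', (Finset.mem_inter.mp hj).1],
          fun j hj => by simp [hx', hj]⟩
      have := hcal₁ x
      rw [h] at this
      have h0 := (Finset.sum_eq_zero_iff.mp this) x' hx'mem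
      rw [← hf x x' (fun j hj => by simp [hx', hj])] at h0
      exact h0
    simp [h, hfx]
  · exact div_mul_cancel₀ _ h
end

section
/- Let V be a finite type, G : SimpleGraph V a connected graph, Cl : V → Finset (Fin n) an assignment of cliques of variables to graph vertices, and x₀ : ∀ j, D j a fixed reference assignment. Let β : V → ((∀ j, D j) → ℝ≥0) be beliefs with each β v local to Cl v, and suppose the beliefs are calibrated along every edge: whenever G.Adj u v, for every assignment x, the sum over all assignments y satisfying y j = x j for all j ∈ Cl u ∩ Cl v and y j = x₀ j for all j ∉ Cl u of β u y equals the sum over all assignments y satisfying y j = x j for all j ∈ Cl u ∩ Cl v and y j = x₀ j for all j ∉ Cl v of β v y. Then all cliques have the same normalization constant: for all u, v : V, the sum over all assignments y satisfying y j = x₀ j for all j ∉ Cl u of β u y equals the sum over all assignments y satisfying y j = x₀ j for all j ∉ Cl v of β v y. -/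
/-- In a connected graph of cliques whose beliefs are calibrated along every edge
(adjacent cliques agree on the marginals of their sepset variables), all clique
beliefs have the same normalization constant. -/
theorem calibrated_cliques_same_normalization_constant
    (n : ℕ) (D : Fin n → Type) [∀ i, Fintype (D i)] [∀ i, Nonempty (D i)]
    [∀ i, DecidableEq (D i)]
    (V : Type) [Fintype V] (G : SimpleGraph V) (hG : G.Connected)
    (Cl : V → Finset (Fin n)) (x₀ : ∀ j, D j)
    (β : V → (∀ j, D j) → NNReal)
    (hβ : ∀ v : V, IsLocal (Cl v) (β v))
    (hcal : ∀ u v : V, G.Adj u v → ∀ x : ∀ j, D j,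
      (∑ y ∈ Finset.univ.filter
          (fun y : ∀ j, D j =>
            (∀ j ∈ Cl u ∩ Cl v, y j = x j) ∧ ∀ j, j ∉ Cl u → y j = x₀ j),
        β u y)
        =
      ∑ y ∈ Finset.univ.filter
          (fun y : ∀ j, D j =>
            (∀ j ∈ Cl u ∩ Cl v, y j = x j) ∧ ∀ j, j ∉ Cl v → y j = x₀ j),
        β v y) :
    ∀ u v : V,
      (∑ y ∈ Finset.univ.filter
          (fun y : ∀ j, D j => ∀ j, j ∉ Cl u → y j = x₀ j),
        β u y)
        =
      ∑ y ∈ Finset.univ.filter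
          (fun y : ∀ j, D j => ∀ j, j ∉ Cl v → y j = x₀ j),
        β v y := by
  classical
  have key : ∀ u v : V, G.Adj u v →
      (∑ y ∈ Finset.univ.filter
          (fun y : ∀ j, D j => ∀ j, j ∉ Cl u → y j = x₀ j), β u y)
        =
      ∑ y ∈ Finset.univ.filter
          (fun y : ∀ j, D j => ∀ j, j ∉ Cl v → y j = x₀ j), β v y := by
    intro u v huv
    have hmain : ∀ (w : V) (γ : (∀ j, D j) → NNReal), Cl u ∩ Cl v ⊆ Cl w →
        (∑ y ∈ Finset.univ.filter
            (fun y : ∀ j, D j => ∀ j, j ∉ Cl w → y j = x₀ j), γ y)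
          =
        ∑ x ∈ Finset.univ.filter
            (fun x : ∀ j, D j => ∀ j, j ∉ Cl u ∩ Cl v → x j = x₀ j),
          ∑ y ∈ Finset.univ.filter
              (fun y : ∀ j, D j =>
                (∀ j ∈ Cl u ∩ Cl v, y j = x j) ∧ ∀ j, j ∉ Cl w → y j = x₀ j),
            γ y := by
      intro w γ hw
      rw [← Finset.sum_fiberwise_of_maps_to
        (t := Finset.univ.filter
            (fun x : ∀ j, D j => ∀ j, j ∉ Cl u ∩ Cl v → x j = x₀ j))
        (g := fun y : ∀ j, D j => fun j => if j ∈ Cl u ∩ Cl v then y j else x₀ j)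
        (fun y _ => by
          simp only [Finset.mem_filter, Finset.mem_univ, true_and]
          intro j hj; simp [hj]) γ]
      apply Finset.sum_congr rfl
      intro x hx
      simp only [Finset.mem_filter, Finset.mem_univ, true_and] at hx
      apply Finset.sum_congr _ (fun _ _ => rfl)
      ext y
      simp only [Finset.mem_filter, Finset.mem_univ, true_and]
      constructor
      · rintro ⟨hA, heq⟩
        refine ⟨fun j hj => ?_, hA⟩
        have := congrFun heq j
        simpa [hj] using this
      · rintro ⟨hsep, hA⟩
        refine ⟨hA, funext fun j => ?_⟩
        by_cases hj : j ∈ Cl u ∩ Cl v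
        · simp [hj, hsep j hj]
        · simp [hj, (hx j hj).symm]
    rw [hmain u (β u) Finset.inter_subset_left,
        hmain v (β v) Finset.inter_subset_right]
    exact Finset.sum_congr rfl fun x _ => hcal u v huv x
  intro u v
  obtain ⟨p⟩ := hG.preconnected u v
  induction p with
  | nil => rfl
  | cons h p ih => exact (key _ _ h).trans ih
end

section
/- Let V be a nonempty finite type and G : SimpleGraph V a tree (G.IsTree). Let Cl : V → Finset (Fin n) assign a clique of variables to each vertex such that every variable i : Fin n belongs to Cl v for some v, and assume the running intersection property: for every i : Fin n, the subgraph of G induced on {v : V | i ∈ Cl v} is connected. Fix a reference assignment x₀ : ∀ j, D j. Let β : V → ((∀ j, D j) → ℝ≥0) satisfy: each β v is local to Cl v and β v x > 0 for every assignment x. Let μ : V → V → ((∀ j, D j) → ℝ≥0) satisfy μ u v = μ v u, with each μ u v local to Cl u ∩ Cl v, and the calibration condition: whenever G.Adj u v, for every assignment x, μ u v x equals the sum over all assignments y satisfying y j = x j for all j ∈ Cl u ∩ Cl v and y j = x₀ j for all j ∉ Cl u of β u y, and also equals the corresponding sum with u and v interchanged. Define the joint function J x = (∏_{v : V} β v x)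 / (∏ over the edges {u,v} of G of μ u v x). Then for every vertex v and every assignment x, the sum over all assignments y satisfying y j = x j for all j ∈ Cl v of J y equals β v x. -/
open SimpleGraph Finset

section GraphAux

variable {V : Type} [DecidableEq V] {G : SimpleGraph V}



/-- A walk in `G` whose support lies in `s` gives reachability in the induced graph. -/
lemma reach_induce_of_walk {s : Set V} :
    ∀ {a b : V} (w : G.Walk a b) (hw : ∀ x ∈ w.support, x ∈ s),
    (G.induce s).Reachable ⟨a, hw a w.start_mem_support⟩ ⟨b, hw b w.end_mem_support⟩ := by
  intro a b w
  induction w with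
  | nil => intro hw; exact Reachable.refl _
  | @cons a c b h p ih =>
    intro hw
    have hc : c ∈ s := hw c (by simp)
    have ha : a ∈ s := hw a (by simp)
    have hadj : (G.induce s).Adj ⟨a, ha⟩ ⟨c, hc⟩ := by simpa using h
    exact (hadj.reachable).trans (ih (fun x hx => hw x (by simp [hx])))

/-- From connectivity of the induced graph, get a path in `G` with support in `s`. -/
lemma exists_path_in {s : Set V} (hconn : (G.induce s).Connected) {a b : V}
    (ha : a ∈ s) (hb : b ∈ s) :
    ∃ w : G.Walk a b, w.IsPath ∧ ∀ x ∈ w.support, x ∈ s := by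
  obtain ⟨W⟩ := hconn.preconnected ⟨a, ha⟩ ⟨b, hb⟩
  let W' : G.Walk a b := W.map (SimpleGraph.Embedding.induce s).toHom
  refine ⟨W'.bypass, W'.bypass_isPath, fun x hx => ?_⟩
  have hx' := W'.support_bypass_subset hx
  simp only [W', Walk.support_map, List.mem_map] at hx'
  obtain ⟨⟨y, hy⟩, _, rfl⟩ := List.mem_map.mp (by rw [← Walk.support_map]; exact hx')
  exact hy

/-- In a tree, a connected finite set with at least two elements has a "leaf" `u ≠ r`
with a unique neighbour `p` in the set, whose removal keeps the set connected. -/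
lemma exists_tree_leaf (hG : G.IsTree) {S : Finset V} (hconn : (G.induce (S : Set V)).Connected)
    {r : V} (hr : r ∈ S) (h2 : 2 ≤ S.card) :
    ∃ u p : V, u ∈ S ∧ u ≠ r ∧ p ∈ S ∧ G.Adj u p ∧
      (∀ q ∈ S, G.Adj u q → q = p) ∧
      (G.induce ((S.erase u : Finset V) : Set V)).Connected := by
  classical
  have hP : ∀ w : V, w ∈ S → ∃ p : G.Walk r w, p.IsPath ∧ ∀ x ∈ p.support, x ∈ (S : Set V) :=
    fun w hw => exists_path_in hconn hr hw
  choose P hP1 hP2 using hP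
  -- uniqueness of paths in the tree
  have huniq : ∀ {a b : V} (p q : G.Walk a b), p.IsPath → q.IsPath → p = q := by
    intro a b p q hp hq
    exact (hG.existsUnique_path a b).unique hp hq
  -- pick u in S \ {r} with maximal path length
  have hTne : (S.erase r).Nonempty := by
    rw [← Finset.card_pos, Finset.card_erase_of_mem hr]
    omega
  set f : V → ℕ := fun w => if h : w ∈ S then (P w h).length else 0 with hf
  obtain ⟨u, huT, hmax⟩ := (S.erase r).exists_max_image f hTne
  have huS : u ∈ S := Finset.mem_of_mem_erase huT
  have hur : u ≠ r := Finset.ne_of_mem_erase huT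
  -- Claim A : u is not on the path to any other w ∈ S
  have hA : ∀ w (hw : w ∈ S), w ≠ u → u ∉ (P w hw).support := by
    intro w hw hwu hu
    by_cases hwr : w = r
    · subst hwr
      have : P w hw = Walk.nil := huniq _ _ (hP1 w hw) (Walk.IsPath.nil)
      rw [this] at hu
      exact hur (by simpa using hu)
    · have hQ : ((P w hw).takeUntil u hu).IsPath := (hP1 w hw).takeUntil hu
      have hQeq : (P w hw).takeUntil u hu = P u huS := huniq _ _ hQ (hP1 u huS)
      have hsplit := (P w hw).take_spec hu
      have hlen : (P w hw).length
          = ((P w hw).takeUntil u hu).length + ((P w hw).dropUntil u hu).length := by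
        conv_lhs => rw [← hsplit]
        exact Walk.length_append _ _
      have hdrop : 1 ≤ ((P w hw).dropUntil u hu).length := by
        by_contra hcon
        have h0 : ((P w hw).dropUntil u hu).length = 0 := by omega
        exact hwu (Walk.eq_of_length_eq_zero h0).symm
      have h1 : f w = (P w hw).length := dif_pos hw
      have h2' : f u = (P u huS).length := dif_pos huS
      have := hmax w (Finset.mem_erase.mpr ⟨hwr, hw⟩)
      rw [h1, h2', hlen, hQeq] at *
      omega
  -- the parent p
  have hnotnil : ¬ (P u huS).reverse.Nil := Walk.not_nil_of_ne hur
  set p : V := (P u huS).reverse.getVert 1 with hp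
  have hadj : G.Adj u p := Walk.adj_snd hnotnil
  have hlen1 : 1 ≤ (P u huS).reverse.length := by
    by_contra hcon
    have h0 : (P u huS).reverse.length = 0 := by omega
    exact hur (Walk.eq_of_length_eq_zero h0)
  have hpmem : p ∈ (P u huS).support := by
    have : p ∈ (P u huS).reverse.support :=
      Walk.mem_support_iff_exists_getVert.mpr ⟨1, rfl, hlen1⟩
    simpa using this
  have hpS : p ∈ S := hP2 u huS p hpmem
  -- uniqueness of the neighbour
  have huniqnb : ∀ q ∈ S, G.Adj u q → q = p := by
    intro q hq hadjq
    have hqu : q ≠ u := fun h => (G.irrefl (h ▸ hadjq)).elim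
    have hqsup : u ∉ (P q hq).support := hA q hq hqu
    have hW : (Walk.cons hadjq (P q hq).reverse).IsPath := by
      rw [Walk.cons_isPath_iff]
      exact ⟨(hP1 q hq).reverse, by simpa using hqsup⟩
    have heq : Walk.cons hadjq (P q hq).reverse = (P u huS).reverse :=
      huniq _ _ hW ((hP1 u huS).reverse)
    have : (Walk.cons hadjq (P q hq).reverse).getVert 1 = p := by rw [heq]
    simpa using this
  -- connectivity after removing u
  have hrS' : r ∈ S.erase u := Finset.mem_erase.mpr ⟨hur.symm, hr⟩
  have hconn' : (G.induce ((S.erase u : Finset V) : Set V)).Connected := by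
    rw [SimpleGraph.connected_iff_exists_forall_reachable]
    refine ⟨⟨r, by simp only [Finset.coe_erase, Set.mem_diff, Set.mem_singleton_iff, Finset.mem_coe]; exact ⟨hr, hur.symm⟩⟩, ?_⟩
    rintro ⟨w, hw⟩
    have hwS' : w ∈ S.erase u := by
      simp only [Finset.coe_erase, Set.mem_diff, Set.mem_singleton_iff, Finset.mem_coe] at hw
      exact Finset.mem_erase.mpr ⟨hw.2, hw.1⟩
    have hwS : w ∈ S := Finset.mem_of_mem_erase hwS'
    have hwu : w ≠ u := Finset.ne_of_mem_erase hwS'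
    have hsupp : ∀ x ∈ (P w hwS).support, x ∈ ((S.erase u : Finset V) : Set V) := by
      intro x hx
      have hxS : x ∈ S := hP2 w hwS x hx
      have hxu : x ≠ u := fun h => hA w hwS hwu (h ▸ hx)
      simp only [Finset.coe_erase, Set.mem_diff, Set.mem_singleton_iff, Finset.mem_coe]
      exact ⟨hxS, hxu⟩
    exact reach_induce_of_walk (P w hwS) hsupp
  exact ⟨u, p, huS, hur, hpS, hadj, huniqnb, hconn'⟩

/-- If `u ≠ w` are joined inside two connected induced subgraphs of a tree, the (unique)
path between them has its second vertex in both sets, adjacent to `u`. -/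
lemma exists_second_vertex (hG : G.IsTree) {s t : Set V}
    (hs : (G.induce s).Connected) (ht : (G.induce t).Connected) {u w : V}
    (hus : u ∈ s) (hws : w ∈ s) (hut : u ∈ t) (hwt : w ∈ t) (huw : u ≠ w) :
    ∃ q : V, G.Adj u q ∧ q ∈ s ∧ q ∈ t := by
  obtain ⟨Q, hQ1, hQ2⟩ := exists_path_in hs hus hws
  obtain ⟨R, hR1, hR2⟩ := exists_path_in ht hut hwt
  have heq : Q = R := (hG.existsUnique_path u w).unique hQ1 hR1
  have hnotnil : ¬ Q.Nil := Walk.not_nil_of_ne huw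
  have hlen1 : 1 ≤ Q.length := by
    by_contra hcon
    have h0 : Q.length = 0 := by omega
    exact huw (Walk.eq_of_length_eq_zero h0)
  refine ⟨Q.getVert 1, Walk.adj_snd hnotnil, ?_, ?_⟩
  · exact hQ2 _ (Walk.mem_support_iff_exists_getVert.mpr ⟨1, rfl, hlen1⟩)
  · rw [heq] at hlen1 ⊢
    exact hR2 _ (Walk.mem_support_iff_exists_getVert.mpr ⟨1, rfl, hlen1⟩)

end GraphAux

/-- In a calibrated clique tree satisfying the running intersection property, the
joint distribution (product of clique beliefs divided by the product of sepset
beliefs) marginalizes onto any clique to give exactly that clique's belief. -/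
theorem calibrated_clique_tree_marginal_eq_belief
    (n : ℕ) (D : Fin n → Type) [∀ i, Fintype (D i)] [∀ i, Nonempty (D i)]
    [∀ i, DecidableEq (D i)]
    (V : Type) [Fintype V] [Nonempty V] [DecidableEq V]
    (G : SimpleGraph V) [DecidableRel G.Adj] (hG : G.IsTree)
    (Cl : V → Finset (Fin n))
    (hcover : ∀ i : Fin n, ∃ v : V, i ∈ Cl v)
    (hrip : ∀ i : Fin n, (G.induce {v : V | i ∈ Cl v}).Connected)
    (x₀ : ∀ j, D j)
    (β : V → (∀ j, D j) → NNReal)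
    (hβ : ∀ v : V, IsLocal (Cl v) (β v))
    (hβpos : ∀ (v : V) (x : ∀ j, D j), 0 < β v x)
    (μ : V → V → (∀ j, D j) → NNReal)
    (hμsymm : ∀ u v : V, μ u v = μ v u)
    (hμ : ∀ u v : V, IsLocal (Cl u ∩ Cl v) (μ u v))
    (hcal : ∀ u v : V, G.Adj u v → ∀ x : ∀ j, D j,
      (μ u v x =
        ∑ y ∈ Finset.univ.filter
            (fun y : ∀ j, D j =>
              (∀ j ∈ Cl u ∩ Cl v, y j = x j) ∧ ∀ j, j ∉ Cl u → y j = x₀ j),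
          β u y)
        ∧
      μ u v x =
        ∑ y ∈ Finset.univ.filter
            (fun y : ∀ j, D j =>
              (∀ j ∈ Cl v ∩ Cl u, y j = x j) ∧ ∀ j, j ∉ Cl v → y j = x₀ j),
          β v y) :
    ∀ (v : V) (x : ∀ j, D j),
      ∑ y ∈ Finset.univ.filter (fun y : ∀ j, D j => ∀ j ∈ Cl v, y j = x j),
        ((∏ u : V, β u y) /
          ∏ e ∈ G.edgeFinset,
            Sym2.lift ⟨fun a b => μ a b y, fun a b => by exact congrFun (hμsymm a b) y⟩ e)
        = β v x := by
  classical
  intro r x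
  -- positivity of separator values
  have hμpos : ∀ (u p : V), G.Adj u p → ∀ z : ∀ j, D j, 0 < μ u p z := by
    intro u p hadj z
    rw [(hcal u p hadj z).1]
    have hwit : (fun j => if j ∈ Cl u ∩ Cl p then z j else x₀ j) ∈
        Finset.univ.filter (fun y : ∀ j, D j =>
          (∀ j ∈ Cl u ∩ Cl p, y j = z j) ∧ ∀ j, j ∉ Cl u → y j = x₀ j) := by
      refine Finset.mem_filter.mpr ⟨Finset.mem_univ _, fun j hj => if_pos hj, fun j hj => ?_⟩
      have : j ∉ Cl u ∩ Cl p := fun h => hj (Finset.mem_inter.mp h).1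
      exact if_neg this
    calc (0 : NNReal) < _ := hβpos u _
      _ ≤ _ := Finset.single_le_sum (fun i _ => zero_le) hwit
  -- the generalized claim, by induction on the size of the connected vertex set
  have key : ∀ (m : ℕ) (S : Finset V), r ∈ S → S.card = m →
      (G.induce (S : Set V)).Connected →
      ∑ y ∈ Finset.univ.filter (fun y : ∀ j, D j =>
          (∀ j ∈ Cl r, y j = x j) ∧ ∀ j : Fin n, (∀ w ∈ S, j ∉ Cl w) → y j = x₀ j),
        ((∏ w ∈ S, β w y) /
          ∏ e ∈ G.edgeFinset.filter (fun e => ∀ a ∈ e, a ∈ S),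
            Sym2.lift ⟨fun a b => μ a b y, fun a b => by exact congrFun (hμsymm a b) y⟩ e)
      = β r x := by
    intro m
    induction m with
    | zero =>
      intro S hrS hcard _
      have : 0 < S.card := Finset.card_pos.mpr ⟨r, hrS⟩
      omega
    | succ m ih =>
      intro S hrS hcard hconn
      by_cases hm : m = 0
      · -- base case : S = {r}
        subst hm
        obtain ⟨a, ha⟩ := Finset.card_eq_one.mp hcard
        have hSr : S = {r} := by
          have har : a = r := by
            have := hrS; rw [ha, Finset.mem_singleton] at this; exact this.symm
          rw [ha, har]
        subst hSr
        have hfilter : Finset.univ.filter (fun y : ∀ j, D j =>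
            (∀ j ∈ Cl r, y j = x j) ∧ ∀ j : Fin n, (∀ w ∈ ({r} : Finset V), j ∉ Cl w) → y j = x₀ j)
            = {fun j => if j ∈ Cl r then x j else x₀ j} := by
          ext y
          simp only [Finset.mem_filter, Finset.mem_univ, true_and, Finset.mem_singleton]
          constructor
          · rintro ⟨h1, h2⟩
            funext j
            by_cases hj : j ∈ Cl r
            · rw [if_pos hj]; exact h1 j hj
            · rw [if_neg hj]
              exact h2 j (fun w hw => hw ▸ hj)
          · rintro rfl
            refine ⟨fun j hj => if_pos hj, fun j hj => ?_⟩
            exact if_neg (hj r rfl)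
        have hedge : G.edgeFinset.filter (fun e => ∀ a ∈ e, a ∈ ({r} : Finset V)) = ∅ := by
          rw [Finset.filter_eq_empty_iff]
          intro e he
          induction e with
          | _ a b =>
            intro h
            have ha : a = r := Finset.mem_singleton.mp (h a (Sym2.mem_mk_left a b))
            have hb : b = r := Finset.mem_singleton.mp (h b (Sym2.mem_mk_right a b))
            have he' : G.Adj a b := by
              rwa [SimpleGraph.mem_edgeFinset, SimpleGraph.mem_edgeSet] at he
            exact G.irrefl (ha ▸ hb ▸ he')
        rw [hfilter, hedge, Finset.sum_singleton, Finset.prod_empty, div_one,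
          Finset.prod_singleton]
        exact hβ r _ x (fun j hj => if_pos hj)
      · -- inductive step : peel off a leaf
        have h2card : 2 ≤ S.card := by omega
        obtain ⟨u, p, huS, hur, hpS, hadj, hunb, hconn'⟩ :=
          exists_tree_leaf hG hconn hrS h2card
        set S' : Finset V := S.erase u with hS'def
        have hrS' : r ∈ S' := Finset.mem_erase.mpr ⟨hur.symm, hrS⟩
        have hpS' : p ∈ S' := Finset.mem_erase.mpr ⟨hadj.ne', hpS⟩
        have hcard' : S'.card = m := by
          rw [hS'def, Finset.card_erase_of_mem huS, hcard]
          omega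
        -- running intersection : separator property
        have hsep : ∀ j : Fin n, j ∈ Cl u → ∀ w ∈ S', j ∈ Cl w → j ∈ Cl p := by
          intro j hju w hwS' hjw
          have hwu : w ≠ u := Finset.ne_of_mem_erase hwS'
          obtain ⟨q, hq1, hq2, hq3⟩ := exists_second_vertex hG (hrip j) hconn
            (show u ∈ {v : V | j ∈ Cl v} from hju) (show w ∈ {v : V | j ∈ Cl v} from hjw)
            (by exact_mod_cast huS) (by exact_mod_cast Finset.mem_of_mem_erase hwS')
            hwu.symm
          have hqS : q ∈ S := by exact_mod_cast hq3
          have : q = p := hunb q hqS hq1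
          exact this ▸ hq2
        set A : Finset (Fin n) := (Cl u).filter (fun j => ∀ w ∈ S', j ∉ Cl w) with hAdef
        have hAsub : A ⊆ Cl u := Finset.filter_subset _ _
        have hnotA : ∀ (j : Fin n) (w : V), w ∈ S' → j ∈ Cl w → j ∉ A :=
          fun j w hw hjw hjA => (Finset.mem_filter.mp hjA).2 w hw hjw
        have hAiff : ∀ j ∈ Cl u, (j ∈ A ↔ j ∉ Cl p) := by
          intro j hj
          simp only [hAdef, Finset.mem_filter, hj, true_and]
          exact ⟨fun h hp' => h p hpS' hp', fun h w hw hjw => h (hsep j hj w hw hjw)⟩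
        set Φ : (∀ j, D j) → (∀ j, D j) := fun y j => if j ∈ A then x₀ j else y j with hΦdef
        -- edge set decomposition
        have hup_notin : s(u, p) ∉ G.edgeFinset.filter (fun e => ∀ a ∈ e, a ∈ S') := by
          intro h
          have := (Finset.mem_filter.mp h).2 u (Sym2.mem_mk_left u p)
          exact Finset.notMem_erase u S this
        have hedge : G.edgeFinset.filter (fun e => ∀ a ∈ e, a ∈ S)
            = insert s(u, p) (G.edgeFinset.filter (fun e => ∀ a ∈ e, a ∈ S')) := by
          ext e
          induction e with
          | _ a b =>
            simp only [Finset.mem_filter, Finset.mem_insert, SimpleGraph.mem_edgeFinset]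
            constructor
            · rintro ⟨he, hmem⟩
              have haS : a ∈ S := hmem a (Sym2.mem_mk_left a b)
              have hbS : b ∈ S := hmem b (Sym2.mem_mk_right a b)
              rw [SimpleGraph.mem_edgeSet] at he
              by_cases hua : u = a
              · subst hua
                have : b = p := hunb b hbS he
                subst this
                exact Or.inl rfl
              · by_cases hub : u = b
                · subst hub
                  have : a = p := hunb a haS he.symm
                  subst this
                  exact Or.inl (Sym2.eq_swap)
                · refine Or.inr ⟨G.mem_edgeSet.mpr he, fun c hc => ?_⟩
                  rcases Sym2.mem_iff.mp hc with rfl | rfl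
                  · exact Finset.mem_erase.mpr ⟨fun h => hua h.symm, haS⟩
                  · exact Finset.mem_erase.mpr ⟨fun h => hub h.symm, hbS⟩
            · rintro (h | ⟨he, hmem⟩)
              · rw [h]
                refine ⟨G.mem_edgeSet.mpr hadj, fun c hc => ?_⟩
                rcases Sym2.mem_iff.mp hc with rfl | rfl
                · exact huS
                · exact hpS
              · exact ⟨he, fun c hc => Finset.mem_of_mem_erase (hmem c hc)⟩
        -- the fibering map sends the S-constraint set to the S'-constraint set
        have hmaps : ∀ y ∈ Finset.univ.filter (fun y : ∀ j, D j =>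
            (∀ j ∈ Cl r, y j = x j) ∧ ∀ j : Fin n, (∀ w ∈ S, j ∉ Cl w) → y j = x₀ j),
            Φ y ∈ Finset.univ.filter (fun y : ∀ j, D j =>
            (∀ j ∈ Cl r, y j = x j) ∧ ∀ j : Fin n, (∀ w ∈ S', j ∉ Cl w) → y j = x₀ j) := by
          intro y hy
          obtain ⟨-, h1, h2⟩ := Finset.mem_filter.mp hy
          refine Finset.mem_filter.mpr ⟨Finset.mem_univ _, fun j hj => ?_, fun j hj => ?_⟩
          · have hjA : j ∉ A := hnotA j r hrS' hj
            simp only [hΦdef, if_neg hjA]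
            exact h1 j hj
          · by_cases hjA : j ∈ A
            · simp only [hΦdef, if_pos hjA]
            · simp only [hΦdef, if_neg hjA]
              refine h2 j (fun w hw => ?_)
              by_cases hwu : w = u
              · subst hwu
                intro hjw
                exact hjA (Finset.mem_filter.mpr ⟨hjw, hj⟩)
              · exact hj w (Finset.mem_erase.mpr ⟨hwu, hw⟩)
        rw [← Finset.sum_fiberwise_of_maps_to hmaps]
        have hinner : ∀ z ∈ Finset.univ.filter (fun y : ∀ j, D j =>
            (∀ j ∈ Cl r, y j = x j) ∧ ∀ j : Fin n, (∀ w ∈ S', j ∉ Cl w) → y j = x₀ j),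
            (∑ y ∈ (Finset.univ.filter (fun y : ∀ j, D j =>
              (∀ j ∈ Cl r, y j = x j) ∧ ∀ j : Fin n, (∀ w ∈ S, j ∉ Cl w) → y j = x₀ j)).filter
                (fun y => Φ y = z),
              ((∏ w ∈ S, β w y) /
                ∏ e ∈ G.edgeFinset.filter (fun e => ∀ a ∈ e, a ∈ S),
                  Sym2.lift ⟨fun a b => μ a b y, fun a b => by exact congrFun (hμsymm a b) y⟩ e))
            = ((∏ w ∈ S', β w z) /
                ∏ e ∈ G.edgeFinset.filter (fun e => ∀ a ∈ e, a ∈ S'),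
                  Sym2.lift ⟨fun a b => μ a b z, fun a b => by exact congrFun (hμsymm a b) z⟩ e) := by
          intro z hz
          obtain ⟨-, hz1, hz2⟩ := Finset.mem_filter.mp hz
          have hzA : ∀ j ∈ A, z j = x₀ j := by
            intro j hjA
            exact hz2 j (Finset.mem_filter.mp hjA).2
          -- the fiber over z
          have hfib : (Finset.univ.filter (fun y : ∀ j, D j =>
              (∀ j ∈ Cl r, y j = x j) ∧ ∀ j : Fin n, (∀ w ∈ S, j ∉ Cl w) → y j = x₀ j)).filter
                (fun y => Φ y = z)
              = Finset.univ.filter (fun y : ∀ j, D j => ∀ j ∉ A, y j = z j) := by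
            ext y
            simp only [Finset.mem_filter, Finset.mem_univ, true_and]
            constructor
            · rintro ⟨⟨h1, h2⟩, hΦy⟩
              intro j hj
              have := congrFun hΦy j
              simpa only [hΦdef, if_neg hj] using this
            · intro h
              have hΦy : Φ y = z := by
                funext j
                by_cases hjA : j ∈ A
                · simp only [hΦdef, if_pos hjA]
                  exact (hzA j hjA).symm
                · simp only [hΦdef, if_neg hjA]
                  exact h j hjA
              refine ⟨⟨fun j hj => ?_, fun j hj => ?_⟩, hΦy⟩
              · rw [h j (hnotA j r hrS' hj)]
                exact hz1 j hj
              · have hjA : j ∉ A := fun hjA => hj u huS (hAsub hjA)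
                rw [h j hjA]
                exact hz2 j (fun w hw => hj w (Finset.mem_of_mem_erase hw))
          rw [hfib]
          -- each summand factors
          have hterm : ∀ y ∈ Finset.univ.filter (fun y : ∀ j, D j => ∀ j ∉ A, y j = z j),
              ((∏ w ∈ S, β w y) /
                ∏ e ∈ G.edgeFinset.filter (fun e => ∀ a ∈ e, a ∈ S),
                  Sym2.lift ⟨fun a b => μ a b y, fun a b => by exact congrFun (hμsymm a b) y⟩ e)
              = β u y * ((∏ w ∈ S', β w z) /
                  (μ u p z *
                  ∏ e ∈ G.edgeFinset.filter (fun e => ∀ a ∈ e, a ∈ S'),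
                    Sym2.lift ⟨fun a b => μ a b z, fun a b => by exact congrFun (hμsymm a b) z⟩ e)) := by
            intro y hy
            have hyz : ∀ j ∉ A, y j = z j := (Finset.mem_filter.mp hy).2
            have hprodβ : (∏ w ∈ S, β w y) = β u y * ∏ w ∈ S', β w z := by
              rw [← Finset.mul_prod_erase S _ huS]
              congr 1
              exact Finset.prod_congr rfl (fun w hw =>
                hβ w y z (fun j hj => hyz j (hnotA j w hw hj)))
            have hprodμ : (∏ e ∈ G.edgeFinset.filter (fun e => ∀ a ∈ e, a ∈ S),
                  Sym2.lift ⟨fun a b => μ a b y, fun a b => by exact congrFun (hμsymm a b) y⟩ e)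
                = μ u p z *
                  ∏ e ∈ G.edgeFinset.filter (fun e => ∀ a ∈ e, a ∈ S'),
                    Sym2.lift ⟨fun a b => μ a b z, fun a b => by exact congrFun (hμsymm a b) z⟩ e := by
              rw [hedge, Finset.prod_insert hup_notin]
              congr 1
              · rw [Sym2.lift_mk]
                exact hμ u p y z (fun j hj =>
                  hyz j (hnotA j p hpS' (Finset.mem_inter.mp hj).2))
              · refine Finset.prod_congr rfl (fun e he => ?_)
                induction e with
                | _ a b =>
                  have haS' : a ∈ S' := (Finset.mem_filter.mp he).2 a (Sym2.mem_mk_left a b)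
                  rw [Sym2.lift_mk, Sym2.lift_mk]
                  exact hμ a b y z (fun j hj =>
                    hyz j (hnotA j a haS' (Finset.mem_inter.mp hj).1))
            rw [hprodβ, hprodμ, mul_div_assoc]
          rw [Finset.sum_congr rfl hterm, ← Finset.sum_mul]
          -- the sum of leaf beliefs over the fiber equals the separator value
          have hsum : (∑ y ∈ Finset.univ.filter (fun y : ∀ j, D j => ∀ j ∉ A, y j = z j),
              β u y) = μ u p z := by
            rw [(hcal u p hadj z).1]
            refine Finset.sum_nbij' (fun y j => if j ∈ Cl u then y j else x₀ j)
              (fun y j => if j ∈ A then y j else z j) ?_ ?_ ?_ ?_ ?_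
            · intro y hy
              have hyz : ∀ j ∉ A, y j = z j := (Finset.mem_filter.mp hy).2
              refine Finset.mem_filter.mpr ⟨Finset.mem_univ _, fun j hj => ?_, fun j hj => ?_⟩
              · have hju : j ∈ Cl u := (Finset.mem_inter.mp hj).1
                have hjp : j ∈ Cl p := (Finset.mem_inter.mp hj).2
                dsimp only
                rw [if_pos hju]
                exact hyz j (fun hjA => (hAiff j hju).mp hjA hjp)
              · exact if_neg hj
            · intro y hy
              have hyc := (Finset.mem_filter.mp hy).2
              refine Finset.mem_filter.mpr ⟨Finset.mem_univ _, fun j hj => if_neg hj⟩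
            · intro y hy
              have hyz : ∀ j ∉ A, y j = z j := (Finset.mem_filter.mp hy).2
              funext j
              dsimp only
              by_cases hjA : j ∈ A
              · rw [if_pos hjA, if_pos (hAsub hjA)]
              · rw [if_neg hjA]
                exact (hyz j hjA).symm
            · intro y hy
              obtain ⟨-, hy1, hy2⟩ := Finset.mem_filter.mp hy
              funext j
              dsimp only
              by_cases hju : j ∈ Cl u
              · rw [if_pos hju]
                by_cases hjA : j ∈ A
                · rw [if_pos hjA]
                · rw [if_neg hjA]
                  have hjp : j ∈ Cl p := not_not.mp (fun h => hjA ((hAiff j hju).mpr h))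
                  exact (hy1 j (Finset.mem_inter.mpr ⟨hju, hjp⟩)).symm
              · rw [if_neg hju]
                exact (hy2 j hju).symm
            · intro y hy
              exact hβ u y _ (fun j hj => (if_pos hj).symm)
          rw [hsum, ← mul_div_assoc,
            mul_div_mul_left _ _ (hμpos u p hadj z).ne']
        rw [Finset.sum_congr rfl hinner]
        exact ih S' hrS' hcard' hconn'
  -- assemble : apply the claim to the full vertex set
  have hconnU : (G.induce ((Finset.univ : Finset V) : Set V)).Connected := by
    rw [Finset.coe_univ]
    exact (SimpleGraph.Iso.connected_iff (SimpleGraph.induceUnivIso G)).mpr hG.isConnected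
  have hmain := key (Finset.univ : Finset V).card Finset.univ (Finset.mem_univ r) rfl hconnU
  have hsetEq : Finset.univ.filter (fun y : ∀ j, D j => ∀ j ∈ Cl r, y j = x j)
      = Finset.univ.filter (fun y : ∀ j, D j =>
          (∀ j ∈ Cl r, y j = x j) ∧
          ∀ j : Fin n, (∀ w ∈ (Finset.univ : Finset V), j ∉ Cl w) → y j = x₀ j) := by
    ext y
    simp only [Finset.mem_filter, Finset.mem_univ, true_and]
    constructor
    · intro h
      refine ⟨h, fun j hj => ?_⟩
      obtain ⟨w, hw⟩ := hcover j
      exact ((hj w trivial) hw).elim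
    · exact fun h => h.1
  have hedgeU : G.edgeFinset.filter
      (fun e => ∀ a ∈ e, a ∈ (Finset.univ : Finset V)) = G.edgeFinset :=
    Finset.filter_true_of_mem (fun e _ => fun a _ => Finset.mem_univ a)
  refine (Finset.sum_congr hsetEq (fun y _ => ?_)).trans hmain
  rw [hedgeU]
end

section
/- Let V be a nonempty finite type and G : SimpleGraph V a tree (G.IsTree). Let Cl : V → Finset (Fin n) assign a clique of variables to each vertex and assume the running intersection property: for every i : Fin n, the subgraph of G induced on {v : V | i ∈ Cl v} is connected. Fix a reference assignment x₀ : ∀ j, D j. Let β : V → ((∀ j, D j) → ℝ≥0) be beliefs with each β v local to Cl v, calibrated along every edge: whenever G.Adj u v, for every assignment x, the sum over all assignments y satisfying y j = x j for all j ∈ Cl u ∩ Cl v and y j = x₀ j for all j ∉ Cl u of β u y equals the sum over all assignments y satisfying y j = x j for all j ∈ Cl u ∩ Cl v and y j = x₀ j for all j ∉ Cl v of β v y. Then any two cliques agree on the marginals of their shared variables: for all u, w : V, every Finset T ⊆ Cl u ∩ Cl w, and every assignment x, the sum over all assignments y satisfying y j = x j for all j ∈ T and y j = x₀ j for all j ∉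 Cl u of β u y equals the sum over all assignments y satisfying y j = x j for all j ∈ T and y j = x₀ j for all j ∉ Cl w of β w y. -/
open Finset

/-- Marginalization lemma: summing with constraint on `T ⊆ S` equals summing the
`S`-marginals over patterns `z` that agree with `x` on `T` and `x₀` off `S`. -/
lemma marg_split {n : ℕ} {D : Fin n → Type} [∀ i, Fintype (D i)] [∀ i, DecidableEq (D i)]
    (C T S : Finset (Fin n)) (hTS : T ⊆ S) (x₀ x : ∀ j, D j)
    (β : (∀ j, D j) → NNReal) :
    (∑ y ∈ Finset.univ.filter
        (fun y : ∀ j, D j => (∀ j ∈ T, y j = x j) ∧ ∀ j, j ∉ C → y j = x₀ j), β y)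
    = ∑ z ∈ Finset.univ.filter
        (fun z : ∀ j, D j => (∀ j ∈ T, z j = x j) ∧ ∀ j, j ∉ S → z j = x₀ j),
        ∑ y ∈ Finset.univ.filter
          (fun y : ∀ j, D j => (∀ j ∈ S, y j = z j) ∧ ∀ j, j ∉ C → y j = x₀ j), β y := by
  classical
  set g : (∀ j, D j) → (∀ j, D j) := fun y j => if j ∈ S then y j else x₀ j with hg
  rw [← Finset.sum_fiberwise_of_maps_to (g := g)
    (t := Finset.univ.filter
      (fun z : ∀ j, D j => (∀ j ∈ T, z j = x j) ∧ ∀ j, j ∉ S → z j = x₀ j))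
    (fun y hy => by
      simp only [mem_filter, mem_univ, true_and] at hy ⊢
      refine ⟨fun j hj => ?_, fun j hj => ?_⟩
      · simp only [hg, if_pos (hTS hj)]; exact hy.1 j hj
      · simp only [hg, if_neg hj]) β]
  refine Finset.sum_congr rfl (fun z hz => Finset.sum_congr ?_ (fun _ _ => rfl))
  simp only [mem_filter, mem_univ, true_and] at hz
  ext y
  simp only [mem_filter, mem_univ, true_and]
  constructor
  · rintro ⟨⟨h1, h2⟩, h3⟩
    refine ⟨fun j hj => ?_, h2⟩
    rw [← h3]; simp [hg, hj]
  · rintro ⟨h1, h2⟩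
    refine ⟨⟨fun j hj => ?_, h2⟩, ?_⟩
    · rw [h1 j (hTS hj)]; exact hz.1 j hj
    · funext j
      by_cases hj : j ∈ S
      · simp [hg, hj, h1 j hj]
      · simp [hg, hj, hz.2 j hj]



/-- In a calibrated clique tree satisfying the running intersection property, any
two cliques agree on the marginals of their shared variables: the marginal of a
variable (or any set of shared variables) can be obtained from any clique
containing it. -/
theorem calibrated_clique_tree_marginals_agree
    (n : ℕ) (D : Fin n → Type) [∀ i, Fintype (D i)] [∀ i, Nonempty (D i)]
    [∀ i, DecidableEq (D i)]
    (V : Type) [Fintype V] [Nonempty V]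
    (G : SimpleGraph V) (hG : G.IsTree)
    (Cl : V → Finset (Fin n))
    (hrip : ∀ i : Fin n, (G.induce {v : V | i ∈ Cl v}).Connected)
    (x₀ : ∀ j, D j)
    (β : V → (∀ j, D j) → NNReal)
    (hβ : ∀ v : V, IsLocal (Cl v) (β v))
    (hcal : ∀ u v : V, G.Adj u v → ∀ x : ∀ j, D j,
      (∑ y ∈ Finset.univ.filter
          (fun y : ∀ j, D j =>
            (∀ j ∈ Cl u ∩ Cl v, y j = x j) ∧ ∀ j, j ∉ Cl u → y j = x₀ j),
        β u y)
        =
      ∑ y ∈ Finset.univ.filter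
          (fun y : ∀ j, D j =>
            (∀ j ∈ Cl u ∩ Cl v, y j = x j) ∧ ∀ j, j ∉ Cl v → y j = x₀ j),
        β v y) :
    ∀ (u w : V) (T : Finset (Fin n)), T ⊆ Cl u ∩ Cl w → ∀ x : ∀ j, D j,
      (∑ y ∈ Finset.univ.filter
          (fun y : ∀ j, D j =>
            (∀ j ∈ T, y j = x j) ∧ ∀ j, j ∉ Cl u → y j = x₀ j),
        β u y)
        =
      ∑ y ∈ Finset.univ.filter
          (fun y : ∀ j, D j =>
            (∀ j ∈ T, y j = x j) ∧ ∀ j, j ∉ Cl w → y j = x₀ j),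
        β w y := by
  classical
  intro u w T hT x
  set F : V → NNReal := fun v =>
    ∑ y ∈ Finset.univ.filter
        (fun y : ∀ j, D j =>
          (∀ j ∈ T, y j = x j) ∧ ∀ j, j ∉ Cl v → y j = x₀ j),
      β v y with hF
  -- edge step
  have edge : ∀ a b : V, G.Adj a b → T ⊆ Cl a ∩ Cl b → F a = F b := by
    intro a b hab hTab
    show (∑ y ∈ Finset.univ.filter
        (fun y : ∀ j, D j =>
          (∀ j ∈ T, y j = x j) ∧ ∀ j, j ∉ Cl a → y j = x₀ j), β a y)
      = ∑ y ∈ Finset.univ.filter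
        (fun y : ∀ j, D j =>
          (∀ j ∈ T, y j = x j) ∧ ∀ j, j ∉ Cl b → y j = x₀ j), β b y
    rw [marg_split (Cl a) T (Cl a ∩ Cl b) hTab x₀ x (β a),
        marg_split (Cl b) T (Cl a ∩ Cl b) hTab x₀ x (β b)]
    exact Finset.sum_congr rfl fun z _ => hcal a b hab z
  -- walk induction
  have key : ∀ (a b : V) (q : G.Walk a b), (∀ v ∈ q.support, T ⊆ Cl v) → F a = F b := by
    intro a b q
    induction q with
    | nil => intro _; rfl
    | @cons a' b' c' h q ih =>
      intro hsup
      have h1 : T ⊆ Cl a' ∩ Cl b' := by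
        intro i hi
        rw [Finset.mem_inter]
        exact ⟨hsup _ (SimpleGraph.Walk.start_mem_support _) hi,
          hsup _ (by simp [SimpleGraph.Walk.support_cons]) hi⟩
      exact (edge _ _ h h1).trans (ih (fun v hv => hsup v (by simp [SimpleGraph.Walk.support_cons, hv])))
  -- the unique path between u and w
  obtain ⟨p⟩ := hG.isConnected u w
  have hsup : ∀ v ∈ p.bypass.support, T ⊆ Cl v := by
    intro v hv i hi
    have hu : i ∈ Cl u := (Finset.mem_inter.mp (hT hi)).1
    have hw : i ∈ Cl w := (Finset.mem_inter.mp (hT hi)).2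
    obtain ⟨q₀⟩ := (hrip i) ⟨u, hu⟩ ⟨w, hw⟩
    have q : G.Walk u w := q₀.map (SimpleGraph.Embedding.induce {v : V | i ∈ Cl v}).toHom
    clear q
    let q : G.Walk u w := q₀.map (SimpleGraph.Embedding.induce {v : V | i ∈ Cl v}).toHom
    have hq : ∀ v' ∈ q.support, i ∈ Cl v' := by
      show ∀ v' ∈ (q₀.map (SimpleGraph.Embedding.induce {v : V | i ∈ Cl v}).toHom).support, i ∈ Cl v'
      intro v' hv'
      rw [SimpleGraph.Walk.support_map, List.mem_map] at hv'
      obtain ⟨⟨v'', hv''⟩, _, rfl⟩ := hv'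
      exact hv''
    have huniq : p.bypass = q.bypass := by
      have := hG.IsAcyclic.path_unique ⟨p.bypass, p.bypass_isPath⟩ ⟨q.bypass, q.bypass_isPath⟩
      exact congrArg Subtype.val this
    have : v ∈ q.support := q.support_bypass_subset (huniq ▸ hv)
    exact hq v this
  exact key u w p.bypass hsup
end

section
/- Let C ⊆ Fin n be a Finset of variables, L ⊆ C a Finset of link variables, and x₀ : ∀ j, D j a fixed reference assignment. Let β : (∀ j, D j) → ℝ≥0 be local to C, and define its marginal over the link variables by m x = the sum over all assignments y satisfying y j = x j for all j ∈ L and y j = x₀ j for all j ∉ C of β y. Let m' : (∀ j, D j) → ℝ≥0 be local to L (the back-propagated target marginal) and assume m x = 0 implies m' x = 0 for every assignment x. Define the updated belief β' x = β x * m' x / m x, with division in ℝ≥0 (where a / 0 = 0). Then: (1) the updated belief has the target link marginal, i.e. for every assignment x, the sum over all assignments y satisfying y j = x j for all j ∈ L and y j = x₀ j for all j ∉ C of β' y equals m' x; and (2) the conditional distribution of the remaining clique variables given the link variables is preserved, i.e. for every assignment x, β' x * m x = β x * m' x. -/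
/-- Correctness of the belief-update step: replacing the clique belief `β` by
`β · m' / m`, where `m` is the current marginal of `β` over the link variables `L`
and `m'` is the back-propagated target marginal, (1) gives a belief whose marginal
over the link variables is `m'`, and (2) preserves the conditional distribution of
the remaining clique variables given the link variables. -/
theorem belief_update_correct
    (n : ℕ) (D : Fin n → Type) [∀ i, Fintype (D i)] [∀ i, Nonempty (D i)]
    [∀ i, DecidableEq (D i)]
    (C L : Finset (Fin n)) (hL : L ⊆ C) (x₀ : ∀ j, D j)
    (β : (∀ j, D j) → NNReal) (hβ : IsLocal C β)
    (m : (∀ j, D j) → NNReal)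
    (hm : ∀ x : ∀ j, D j,
      m x = ∑ y ∈ Finset.univ.filter
          (fun y : ∀ j, D j =>
            (∀ j ∈ L, y j = x j) ∧ ∀ j, j ∉ C → y j = x₀ j),
        β y)
    (m' : (∀ j, D j) → NNReal) (hm' : IsLocal L m')
    (hzero : ∀ x : ∀ j, D j, m x = 0 → m' x = 0)
    (β' : (∀ j, D j) → NNReal)
    (hβ' : ∀ x : ∀ j, D j, β' x = β x * m' x / m x) :
    (∀ x : ∀ j, D j,
      (∑ y ∈ Finset.univ.filter
          (fun y : ∀ j, D j =>
            (∀ j ∈ L, y j = x j) ∧ ∀ j, j ∉ C → y j = x₀ j),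
        β' y) = m' x)
    ∧
    (∀ x : ∀ j, D j, β' x * m x = β x * m' x) := by
  -- m is local to L: the filter set only depends on x through its values on L
  have hmL : ∀ x y : ∀ j, D j, (∀ j ∈ L, x j = y j) → m x = m y := by
    intro x y h
    rw [hm x, hm y]
    apply Finset.sum_congr
    · apply Finset.filter_congr
      intro z _
      constructor
      · rintro ⟨h1, h2⟩
        exact ⟨fun j hj => (h1 j hj).trans (h j hj), h2⟩
      · rintro ⟨h1, h2⟩
        exact ⟨fun j hj => (h1 j hj).trans (h j hj).symm, h2⟩
    · intros; rfl
  have key : ∀ x : ∀ j, D j, β' x * m x = β x * m' x := by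
    intro x
    rw [hβ' x]
    rcases eq_or_ne (m x) 0 with h0 | h0
    · simp [h0, hzero x h0]
    · rw [div_mul_cancel₀ _ h0]
  refine ⟨?_, key⟩
  intro x
  rcases eq_or_ne (m x) 0 with h0 | h0
  · rw [hzero x h0]
    apply Finset.sum_eq_zero
    intro y hy
    simp only [Finset.mem_filter] at hy
    rw [hβ' y]
    have hmy : m y = 0 := (hmL y x hy.2.1).trans h0
    rw [hmy, div_zero]
  · have : ∀ y ∈ Finset.univ.filter
        (fun y : ∀ j, D j =>
          (∀ j ∈ L, y j = x j) ∧ ∀ j, j ∉ C → y j = x₀ j),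
        β' y = β y * (m' x / m x) := by
      intro y hy
      simp only [Finset.mem_filter] at hy
      rw [hβ' y, hmL y x hy.2.1, hm' y x hy.2.1, mul_div_assoc]
    rw [Finset.sum_congr rfl this, ← Finset.sum_mul, ← hm x,
      mul_div_assoc' , mul_comm, mul_div_assoc, div_self h0, mul_one]
end
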